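/- Let M be an n×n Hermitian complex matrix, let 1 ≤ s ≤ n, and let A = (α₁,…,α_s) be an n×s complex matrix with columns α₁,…,α_s. If some column α_l does not lie in the range (column space) of M, then for every real k > 0 the matrix N = M − k A A† satisfies i_-(N) > i_-(M). -/

import Mathlib

open Matrix Kronecker
open scoped ComplexOrder

/-- Partial transpose on the first factor of an `m × n` bipartite system:
`(ptrans M) ((i,k),(j,l)) = M ((j,k),(i,l))`. -/
def ptrans {m n : ℕ} (M : Matrix (Fin m × Fin n) (Fin m × Fin n) ℂ) :
    Matrix (Fin m × Fin n) (Fin m × Fin n) ℂ :=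
  Matrix.of fun p q => M (q.1, p.2) (p.1, q.2)

/-- Number of negative eigenvalues (with multiplicity) of a Hermitian matrix. -/
noncomputable def iNeg {ι : Type} [Fintype ι] [DecidableEq ι] {M : Matrix ι ι ℂ}
    (hM : M.IsHermitian) : ℕ :=
  (Finset.univ.filter fun i => hM.eigenvalues i < 0).card

/-- Number of zero eigenvalues (with multiplicity) of a Hermitian matrix. -/
noncomputable def iZero {ι : Type} [Fintype ι] [DecidableEq ι] {M : Matrix ι ι ℂ}
    (hM : M.IsHermitian) : ℕ :=
  (Finset.univ.filter fun i => hM.eigenvalues i = 0).card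

/-- Number of positive eigenvalues (with multiplicity) of a Hermitian matrix. -/
noncomputable def iPos {ι : Type} [Fintype ι] [DecidableEq ι] {M : Matrix ι ι ℂ}
    (hM : M.IsHermitian) : ℕ :=
  (Finset.univ.filter fun i => 0 < hM.eigenvalues i).card

namespace InertiaAux

open Module Submodule
open scoped InnerProductSpace

variable {n s : ℕ}

lemma toEuclideanLin_eigvec {H : Matrix (Fin n) (Fin n) ℂ} (hH : H.IsHermitian) (i : Fin n) :
    Matrix.toEuclideanLin H (hH.eigenvectorBasis i)
      = (hH.eigenvalues i : ℂ) • hH.eigenvectorBasis i := by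
  apply (WithLp.equiv 2 _).injective
  simp [Matrix.toEuclideanLin_apply, hH.mulVec_eigenvectorBasis]

lemma quadForm_eq {H : Matrix (Fin n) (Fin n) ℂ} (hH : H.IsHermitian)
    (x : EuclideanSpace ℂ (Fin n)) :
    (inner ℂ x (Matrix.toEuclideanLin H x) : ℂ)
      = ((∑ i, hH.eigenvalues i * ‖hH.eigenvectorBasis.repr x i‖ ^ 2 : ℝ) : ℂ) := by
  set b := hH.eigenvectorBasis with hb
  have hsym : (Matrix.toEuclideanLin H).IsSymmetric := Matrix.isHermitian_iff_isSymmetric.mp hH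
  rw [← b.sum_inner_mul_inner x (Matrix.toEuclideanLin H x)]
  push_cast
  refine Finset.sum_congr rfl fun i _ => ?_
  have h1 : (inner ℂ (b i) (Matrix.toEuclideanLin H x) : ℂ)
      = (hH.eigenvalues i : ℂ) * inner ℂ (b i) x := by
    rw [← hsym (b i) x, toEuclideanLin_eigvec hH i, inner_smul_left]
    simp [hb]
  rw [h1, b.repr_apply_apply]
  have h2 : (inner ℂ x (b i) : ℂ) = starRingEnd ℂ (inner ℂ (b i) x) := by rw [inner_conj_symm]
  rw [h2]
  have : (starRingEnd ℂ) (inner ℂ (b i) x) * ((hH.eigenvalues i : ℂ) * inner ℂ (b i) x)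
      = (hH.eigenvalues i : ℂ) * ((starRingEnd ℂ) (inner ℂ (b i) x) * inner ℂ (b i) x) := by ring
  rw [this, RCLike.conj_mul]
  norm_cast
  exact (Complex.ofReal_mul _ _).symm

lemma repr_eq_zero_of_mem_span {ι : Type*} [Fintype ι] [DecidableEq ι]
    {E : Type*} [NormedAddCommGroup E] [InnerProductSpace ℂ E]
    (b : OrthonormalBasis ι ℂ E) (s' : Set ι) {x : E}
    (hx : x ∈ span ℂ (Set.range fun i : s' => b i)) {i : ι} (hi : i ∉ s') :
    b.repr x i = 0 := by
  rw [b.repr_apply_apply]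
  induction hx using Submodule.span_induction with
  | mem y hy =>
    obtain ⟨⟨j, hj⟩, rfl⟩ := hy
    exact b.orthonormal.2 (fun h => hi (h ▸ hj))
  | zero => simp
  | add y z _ _ hy hz => rw [inner_add_right, hy, hz, add_zero]
  | smul c y _ hy => rw [inner_smul_right, hy, mul_zero]

/-- If the quadratic form of Hermitian `H` is negative definite on a subspace `W`, then
`finrank W ≤ iNeg hH`. -/
lemma finrank_le_iNeg {H : Matrix (Fin n) (Fin n) ℂ} (hH : H.IsHermitian)
    (W : Submodule ℂ (EuclideanSpace ℂ (Fin n)))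
    (hW : ∀ x ∈ W, x ≠ 0 → (inner ℂ x (Matrix.toEuclideanLin H x) : ℂ) < 0) :
    finrank ℂ W ≤ iNeg hH := by
  classical
  set b := hH.eigenvectorBasis with hb
  set s' : Set (Fin n) := {i | ¬ hH.eigenvalues i < 0} with hs
  set P : Submodule ℂ (EuclideanSpace ℂ (Fin n)) := span ℂ (Set.range fun i : s' => b i) with hP
  have hPrank : finrank ℂ P = Fintype.card s' :=
    finrank_span_eq_card ((b.orthonormal.linearIndependent).comp _ Subtype.val_injective)
  have hPpos : ∀ x ∈ P, 0 ≤ (inner ℂ x (Matrix.toEuclideanLin H x) : ℂ) := by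
    intro x hxP
    rw [quadForm_eq hH x]
    norm_cast
    apply Finset.sum_nonneg
    intro i _
    by_cases hi : hH.eigenvalues i < 0
    · have h0 : b.repr x i = 0 := repr_eq_zero_of_mem_span b s' hxP (by simp [hs, hi])
      rw [hb] at h0
      simp [h0]
    · exact mul_nonneg (not_lt.mp hi) (sq_nonneg _)
  have hdisj : W ⊓ P = ⊥ := by
    rw [Submodule.eq_bot_iff]
    rintro x ⟨hxW, hxP⟩
    by_contra hx0
    exact (hW x hxW hx0).not_ge (hPpos x hxP)
  have hsum := Submodule.finrank_sup_add_finrank_inf_eq W P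
  rw [hdisj, finrank_bot] at hsum
  have hle : finrank ℂ ↥(W ⊔ P) ≤ n := by
    simpa using Submodule.finrank_le (W ⊔ P)
  have hcard : Fintype.card s' + iNeg hH = n := by
    rw [Fintype.card_subtype]
    simp only [hs, Set.mem_setOf_eq]
    have := Finset.card_filter_add_card_filter_not
      (s := Finset.univ) (p := fun i : Fin n => hH.eigenvalues i < 0)
    simp only [Finset.card_univ, Fintype.card_fin] at this
    unfold iNeg
    omega
  omega

/-- The negative eigenspace span. -/
noncomputable def negSpace {H : Matrix (Fin n) (Fin n) ℂ} (hH : H.IsHermitian) :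
    Submodule ℂ (EuclideanSpace ℂ (Fin n)) :=
  span ℂ (Set.range fun i : {i : Fin n | hH.eigenvalues i < 0} => hH.eigenvectorBasis i)

lemma finrank_negSpace {H : Matrix (Fin n) (Fin n) ℂ} (hH : H.IsHermitian) :
    finrank ℂ (negSpace hH) = iNeg hH := by
  classical
  have h : (Set.range fun i : {i : Fin n | hH.eigenvalues i < 0} => hH.eigenvectorBasis i)
      = Set.range (hH.eigenvectorBasis ∘ Subtype.val) := rfl
  rw [negSpace, h, finrank_span_eq_card
    ((hH.eigenvectorBasis.orthonormal.linearIndependent).comp _ Subtype.val_injective),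
    Fintype.card_subtype]
  unfold iNeg
  congr 1

lemma negSpace_quad_neg {H : Matrix (Fin n) (Fin n) ℂ} (hH : H.IsHermitian)
    {x : EuclideanSpace ℂ (Fin n)} (hx : x ∈ negSpace hH) (hx0 : x ≠ 0) :
    (inner ℂ x (Matrix.toEuclideanLin H x) : ℂ) < 0 := by
  rw [quadForm_eq hH x]
  norm_cast
  set b := hH.eigenvectorBasis with hb
  obtain ⟨i, hi⟩ : ∃ i, b.repr x i ≠ 0 := by
    by_contra h
    push_neg at h
    apply hx0
    have : b.repr x = 0 := by ext j; simpa using h j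
    simpa [this] using (b.repr.symm_apply_apply x).symm
  have hineg : hH.eigenvalues i < 0 := by
    by_contra hni
    exact hi (repr_eq_zero_of_mem_span b _ hx (by simp [hni]))
  have := Finset.sum_lt_sum
    (f := fun j => hH.eigenvalues j * ‖b.repr x j‖ ^ 2) (g := fun _ => (0 : ℝ))
    (by
      intro j _
      by_cases hj : hH.eigenvalues j < 0
      · exact mul_nonpos_iff.mpr (Or.inr ⟨hj.le, sq_nonneg _⟩)
      · have h0 : b.repr x j = 0 := repr_eq_zero_of_mem_span b _ hx (by simp [hj])
        simp [h0])
    ⟨i, Finset.mem_univ i,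
      mul_neg_of_neg_of_pos hineg (pow_pos (norm_pos_iff.mpr hi) 2)⟩
  simpa using this

lemma mem_ker_not_mem_negSpace {H : Matrix (Fin n) (Fin n) ℂ} (hH : H.IsHermitian)
    {u : EuclideanSpace ℂ (Fin n)} (hu : Matrix.toEuclideanLin H u = 0) (hu0 : u ≠ 0) :
    u ∉ negSpace hH := by
  intro hmem
  have := negSpace_quad_neg hH hmem hu0
  rw [hu, inner_zero_right] at this
  exact lt_irrefl _ this

/-- Existence of a kernel vector not orthogonal to a vector outside the range. -/
lemma exists_kerVec {H : Matrix (Fin n) (Fin n) ℂ} (hH : H.IsHermitian)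
    (α : EuclideanSpace ℂ (Fin n))
    (hα : α ∉ LinearMap.range (Matrix.toEuclideanLin H)) :
    ∃ u : EuclideanSpace ℂ (Fin n),
      Matrix.toEuclideanLin H u = 0 ∧ (inner ℂ u α : ℂ) ≠ 0 := by
  set T := Matrix.toEuclideanLin H with hT
  have hsym : T.IsSymmetric := Matrix.isHermitian_iff_isSymmetric.mp hH
  have hrange : LinearMap.range T = (LinearMap.ker T)ᗮ := by
    apply Submodule.eq_of_le_of_finrank_eq
    · rintro _ ⟨x, rfl⟩
      rw [Submodule.mem_orthogonal]
      intro v hv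
      rw [← hsym v x, LinearMap.mem_ker.mp hv, inner_zero_left]
    · have h1 := LinearMap.finrank_range_add_finrank_ker T
      have h2 := Submodule.finrank_add_finrank_orthogonal (K := LinearMap.ker T)
      simp only [finrank_euclideanSpace, Fintype.card_fin] at h1 h2
      omega
  rw [hrange, Submodule.mem_orthogonal] at hα
  push_neg at hα
  obtain ⟨u, hu1, hu2⟩ := hα
  exact ⟨u, LinearMap.mem_ker.mp hu1, hu2⟩

end InertiaAux

open InertiaAux Module Submodule

/-- If some column of `A` does not lie in the range of the Hermitian matrix
`M`, then for every `k > 0` the matrix `M - k A A†` has strictly more negative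
eigenvalues than `M`. -/
theorem inertia_sub_rank_one_neg_increase {n s : ℕ} (hs1 : 1 ≤ s) (hsn : s ≤ n)
    (M : Matrix (Fin n) (Fin n) ℂ) (hM : M.IsHermitian)
    (A : Matrix (Fin n) (Fin s) ℂ)
    (hcol : ∃ l : Fin s, ¬ ∃ v : Fin n → ℂ, M *ᵥ v = fun i => A i l) :
    ∀ k : ℝ, 0 < k →
      ∀ hN : (M - (k : ℂ) • (A * Aᴴ)).IsHermitian,
        iNeg hM < iNeg hN := by
  classical
  obtain ⟨l, hl⟩ := hcol
  intro k hk hN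
  set T := Matrix.toEuclideanLin M with hT
  set G := Matrix.toEuclideanLin (A * Aᴴ) with hG
  have hsym : T.IsSymmetric := Matrix.isHermitian_iff_isSymmetric.mp hM
  set α : EuclideanSpace ℂ (Fin n) := (WithLp.equiv 2 _).symm (fun i => A i l) with hα
  have hαr : α ∉ LinearMap.range T := by
    rintro ⟨v, hv⟩
    apply hl
    refine ⟨WithLp.equiv 2 _ v, ?_⟩
    have := congrArg (WithLp.equiv 2 (Fin n → ℂ)) hv
    rw [hT, Matrix.toEuclideanLin_apply, Equiv.apply_symm_apply] at this
    exact this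
  obtain ⟨u, huk, huα⟩ := exists_kerVec hM α hαr
  have hu0 : u ≠ 0 := by
    rintro rfl
    simp at huα
  -- the Gram quadratic form
  have gram_quad : ∀ x : EuclideanSpace ℂ (Fin n),
      (inner ℂ x (G x) : ℂ) = ((∑ j, ‖(Aᴴ *ᵥ (WithLp.equiv 2 _) x) j‖ ^ 2 : ℝ) : ℂ) := by
    intro x
    rw [hG, EuclideanSpace.inner_eq_star_dotProduct, Matrix.toEuclideanLin_apply,
      WithLp.ofLp_toLp, dotProduct_comm, ← Matrix.mulVec_mulVec, dotProduct_mulVec]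
    change star ((WithLp.equiv 2 (Fin n → ℂ)) x) ᵥ* A ⬝ᵥ (Aᴴ *ᵥ (WithLp.equiv 2 (Fin n → ℂ)) x) = _
    have hrow : star ((WithLp.equiv 2 (Fin n → ℂ)) x) ᵥ* A
        = star (Aᴴ *ᵥ (WithLp.equiv 2 (Fin n → ℂ)) x) := by
      rw [Matrix.star_mulVec, Matrix.conjTranspose_conjTranspose]
    rw [hrow, dotProduct]
    push_cast
    refine Finset.sum_congr rfl fun j _ => ?_
    rw [Pi.star_apply, RCLike.star_def, RCLike.conj_mul]
    norm_cast
  -- W = negSpace ⊔ span u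
  set W : Submodule ℂ (EuclideanSpace ℂ (Fin n)) := negSpace hM ⊔ (ℂ ∙ u) with hW
  have hnotmem : u ∉ negSpace hM := mem_ker_not_mem_negSpace hM huk hu0
  have hWrank : finrank ℂ W = iNeg hM + 1 := by
    have hdisj : negSpace hM ⊓ (ℂ ∙ u) = ⊥ :=
      (Submodule.disjoint_span_singleton.mpr (fun h => absurd h hnotmem)).eq_bot
    have := Submodule.finrank_sup_add_finrank_inf_eq (negSpace hM) (ℂ ∙ u)
    rw [hdisj, finrank_bot, finrank_negSpace, finrank_span_singleton hu0] at this
    rw [hW]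
    omega
  -- negativity of the N-form on W
  have hneg : ∀ x ∈ W, x ≠ 0 →
      (inner ℂ x (Matrix.toEuclideanLin (M - (k : ℂ) • (A * Aᴴ)) x) : ℂ) < 0 := by
    intro x hxW hx0
    obtain ⟨y, hy, z, hz, rfl⟩ := Submodule.mem_sup.mp hxW
    obtain ⟨c, rfl⟩ := Submodule.mem_span_singleton.mp hz
    have hTx : T (y + c • u) = T y := by
      rw [map_add, _root_.map_smul, huk, smul_zero, add_zero]
    have hinnerT : (inner ℂ (y + c • u) (T (y + c • u)) : ℂ) = inner ℂ y (T y) := by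
      rw [hTx, inner_add_left, inner_smul_left]
      have : (inner ℂ u (T y) : ℂ) = 0 := by
        rw [← hsym u y, huk, inner_zero_left]
      rw [this, mul_zero, add_zero]
    have hsplit : Matrix.toEuclideanLin (M - (k : ℂ) • (A * Aᴴ)) (y + c • u)
        = T (y + c • u) - (k : ℂ) • G (y + c • u) := by
      rw [map_sub, _root_.map_smul]
      simp [hT, hG]
    rw [hsplit, inner_sub_right, inner_smul_right, hinnerT]
    have hGnn : (0:ℂ) ≤ inner ℂ (y + c • u) (G (y + c • u)) := by
      rw [gram_quad]
      norm_cast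
      positivity
    by_cases hy0 : y = 0
    · -- x = c • u, c ≠ 0
      have hc : c ≠ 0 := by
        rintro rfl
        simp [hy0] at hx0
      have hyT : (inner ℂ y (T y) : ℂ) = 0 := by simp [hy0]
      rw [hyT, zero_sub, neg_lt_zero]
      apply mul_pos (by exact_mod_cast hk)
      rw [gram_quad]
      have hwl : (Aᴴ *ᵥ (WithLp.equiv 2 (Fin n → ℂ)) (y + c • u)) l ≠ 0 := by
        have hval : (Aᴴ *ᵥ (WithLp.equiv 2 (Fin n → ℂ)) u) l
            = starRingEnd ℂ (inner ℂ u α : ℂ) := by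
          rw [EuclideanSpace.inner_eq_star_dotProduct, dotProduct, map_sum,
            Matrix.mulVec, dotProduct]
          refine Finset.sum_congr rfl fun j _ => ?_
          simp [hα, Matrix.conjTranspose_apply, Equiv.apply_symm_apply, Pi.star_apply,
            RCLike.star_def, _root_.map_mul, Complex.conj_conj, mul_comm]
        have : (Aᴴ *ᵥ (WithLp.equiv 2 (Fin n → ℂ)) (y + c • u)) l
            = c * ((Aᴴ *ᵥ (WithLp.equiv 2 (Fin n → ℂ)) u) l) := by
          subst hy0
          simp [Matrix.mulVec_smul]
        rw [this, hval]
        exact mul_ne_zero hc fun h => huα (by simpa using congrArg (starRingEnd ℂ) h)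
      norm_cast
      have h1 : 0 < ‖(Aᴴ *ᵥ (WithLp.equiv 2 (Fin n → ℂ)) (y + c • u)) l‖ ^ 2 :=
        pow_pos (norm_pos_iff.mpr hwl) 2
      refine lt_of_lt_of_le h1 ?_
      exact Finset.single_le_sum (f := fun j => ‖(Aᴴ *ᵥ (WithLp.equiv 2 (Fin n → ℂ)) (y + c • u)) j‖ ^ 2)
        (fun j _ => by positivity) (Finset.mem_univ l)
    · have hyneg : (inner ℂ y (T y) : ℂ) < 0 := negSpace_quad_neg hM hy hy0
      have hkG : (0:ℂ) ≤ (k : ℂ) * inner ℂ (y + c • u) (G (y + c • u)) :=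
        mul_nonneg (by exact_mod_cast hk.le) hGnn
      calc (inner ℂ y (T y) : ℂ) - (k : ℂ) * inner ℂ (y + c • u) (G (y + c • u))
          ≤ inner ℂ y (T y) := sub_le_self _ hkG
        _ < 0 := hyneg
  have hfin := finrank_le_iNeg hN W hneg
  rw [hWrank] at hfin
  omega
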